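/- PCP reduces to CFP: for a list of cards P and a symbol # not occurring in P, there exists a nonempty match A ⊆ P (A¹ = A²) if and only if there exists a nonempty A ⊆ γP with σ_#A a palindrome, where γP := [ x / reverse y | x/y ∈ P ]. -/

import Mathlib

abbrev Card := List ℕ × List ℕ

def tau1 : List Card → List ℕ
  | [] => []
  | c :: A => c.1 ++ tau1 A

def tau2 : List Card → List ℕ
  | [] => []
  | c :: A => c.2 ++ tau2 A

inductive Rew (R : List Card) : List ℕ → List ℕ → Prop
  | step (u v l r : List ℕ) : (l, r) ∈ R → Rew R (u ++ l ++ v) (u ++ r ++ v)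

def Rewt (R : List Card) : List ℕ → List ℕ → Prop :=
  Relation.ReflTransGen (Rew R)

def sigma (a : ℕ) : List Card → List ℕ
  | [] => [a]
  | c :: A => c.1 ++ sigma a A ++ c.2

lemma sigma_map (a : ℕ) (A : List Card) :
    sigma a (A.map (fun c => (c.1, c.2.reverse))) = tau1 A ++ a :: (tau2 A).reverse := by
  induction A with
  | nil => simp [sigma, tau1, tau2]
  | cons c A ih =>
    simp [sigma, tau1, tau2, ih, List.reverse_append]

lemma split_unique (a : ℕ) : ∀ s t u v : List ℕ, a ∉ s → a ∉ t →
    s ++ a :: u = t ++ a :: v → s = t ∧ u = v := by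
  intro s
  induction s with
  | nil =>
    intro t u v _ ht h
    cases t with
    | nil => simpa using h
    | cons x t =>
      simp at h
      exact absurd (h.1 ▸ @List.mem_cons_self _ x t) ht
  | cons x s ih =>
    intro t u v hs ht h
    cases t with
    | nil =>
      simp at h
      exact absurd (h.1 ▸ @List.mem_cons_self _ x s) hs
    | cons y t =>
      simp only [List.cons_append, List.cons.injEq] at h
      obtain ⟨rfl, h2⟩ := h
      have := ih t u v (fun hx => hs (List.mem_cons_of_mem _ hx))
        (fun hx => ht (List.mem_cons_of_mem _ hx)) h2
      exact ⟨by rw [this.1], this.2⟩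

lemma hash_not_tau1 (P : List Card) (hash : ℕ) (A : List Card)
    (hh : ∀ c ∈ P, hash ∉ c.1 ∧ hash ∉ c.2) (hA : A ⊆ P) : hash ∉ tau1 A := by
  induction A with
  | nil => simp [tau1]
  | cons c A ih =>
    simp only [tau1, List.mem_append]
    rintro (h | h)
    · exact (hh c (hA (@List.mem_cons_self _ c A))).1 h
    · exact ih (fun x hx => hA (List.mem_cons_of_mem _ hx)) h

lemma hash_not_tau2 (P : List Card) (hash : ℕ) (A : List Card)
    (hh : ∀ c ∈ P, hash ∉ c.1 ∧ hash ∉ c.2) (hA : A ⊆ P) : hash ∉ tau2 A := by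
  induction A with
  | nil => simp [tau2]
  | cons c A ih =>
    simp only [tau2, List.mem_append]
    rintro (h | h)
    · exact (hh c (hA (@List.mem_cons_self _ c A))).2 h
    · exact ih (fun x hx => hA (List.mem_cons_of_mem _ hx)) h

theorem PCP_CFP (P : List Card) (hash : ℕ)
    (hh : ∀ c ∈ P, hash ∉ c.1 ∧ hash ∉ c.2) :
    (∃ A : List Card, A ⊆ P ∧ A ≠ [] ∧ tau1 A = tau2 A) ↔
      (∃ A : List Card, A ⊆ P.map (fun c => (c.1, c.2.reverse)) ∧ A ≠ [] ∧
        sigma hash A = (sigma hash A).reverse) := by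
  constructor
  · rintro ⟨A, hAP, hne, heq⟩
    refine ⟨A.map (fun c => (c.1, c.2.reverse)), List.map_subset _ hAP, by simp [hne], ?_⟩
    rw [sigma_map, heq]
    simp
  · rintro ⟨B, hBP, hne, hpal⟩
    refine ⟨B.map (fun c => (c.1, c.2.reverse)), ?_, by simp [hne], ?_⟩
    · intro c hc
      simp only [List.mem_map] at hc
      obtain ⟨b, hb, rfl⟩ := hc
      obtain ⟨d, hd, rfl⟩ := List.mem_map.1 (hBP hb)
      simpa using hd
    · set A := B.map (fun c : Card => (c.1, c.2.reverse)) with hA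
      have hB : B = A.map (fun c => (c.1, c.2.reverse)) := by
        simp [hA, List.map_map, Function.comp_def]
      have hsub : A ⊆ P := by
        intro c hc
        simp only [hA, List.mem_map] at hc
        obtain ⟨b, hb, rfl⟩ := hc
        obtain ⟨d, hd, rfl⟩ := List.mem_map.1 (hBP hb)
        simpa using hd
      have h1 : hash ∉ tau1 A := hash_not_tau1 P hash A hh hsub
      have h2 : hash ∉ tau2 A := hash_not_tau2 P hash A hh hsub
      rw [hB, sigma_map] at hpal
      simp only [List.reverse_append, List.reverse_cons, List.reverse_reverse,
        List.append_assoc] at hpal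
      have := (split_unique hash _ _ _ _ h2 h1 hpal.symm).1
      exact this.symm
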